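/- Let Y be an n×n lower triangular (0,1)-matrix with unit diagonal and Z = YY^T. Then ρ(Z^{-1}) ≤ ρ(Z_0^{-1}) where Z_0 = Y_0 Y_0^T with (Y_0)_{ij} = 0 if i < j, 1 if i = j, 1 if i > j with i+j odd, 0 otherwise, and ρ denotes spectral radius. -/

import Mathlib

open Matrix

open scoped ENNReal

namespace Stmt16Aux




/-- absolute value of the entries of the inverse of the extremal matrix -/
noncomputable def fe (i j : ℕ) : ℝ :=
  if i = j then 1 else if j < i then (Nat.fib (i - j) : ℝ) else 0

lemma fe_nonneg (i j : ℕ) : 0 ≤ fe i j := by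
  unfold fe; split_ifs <;> positivity

/-- entries of `Y₀` as a function on `ℕ` -/
noncomputable def yb (i j : ℕ) : ℝ :=
  if i = j then 1 else if j < i ∧ i % 2 ≠ j % 2 then 1 else 0

/-- entries of `Y₀⁻¹` as a function on `ℕ` -/
noncomputable def vb (i j : ℕ) : ℝ := (-1) ^ (i + j) * fe i j

lemma abs_vb (i j : ℕ) : |vb i j| = fe i j := by
  rw [vb, abs_mul, abs_pow, abs_neg, abs_one, one_pow, one_mul,
    abs_of_nonneg (fe_nonneg i j)]

lemma vb_diag (j : ℕ) : vb j j = 1 := by simp [vb, fe]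

lemma vb_strict (i j : ℕ) (h : i < j) : vb i j = 0 := by
  simp [vb, fe, Nat.ne_of_lt h, not_lt.2 h.le, Nat.not_lt_of_lt h]

lemma vb_rec (i j : ℕ) (h : j + 3 ≤ i) : vb i j = vb (i-2) j - vb (i-1) j := by
  obtain ⟨b, rfl⟩ : ∃ b, i = j + 3 + b := ⟨i - (j + 3), by omega⟩
  have e1 : j + 3 + b - 2 = j + 1 + b := by omega
  have e2 : j + 3 + b - 1 = j + 2 + b := by omega
  rw [e1, e2]
  simp only [vb, fe, if_neg (by omega : ¬ j + 3 + b = j),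
    if_neg (by omega : ¬ j + 1 + b = j), if_neg (by omega : ¬ j + 2 + b = j),
    if_pos (by omega : j < j + 3 + b), if_pos (by omega : j < j + 1 + b),
    if_pos (by omega : j < j + 2 + b),
    (by omega : j + 3 + b - j = b + 3), (by omega : j + 1 + b - j = b + 1),
    (by omega : j + 2 + b - j = b + 2)]
  have hfib : (Nat.fib (b + 3) : ℝ) = Nat.fib (b + 1) + Nat.fib (b + 2) := by
    rw [show b + 3 = (b + 1) + 2 by omega, Nat.fib_add_two]
    push_cast; ring
  rw [show j + 3 + b + j = 2 * j + (b + 3) by omega,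
    show j + 1 + b + j = 2 * j + (b + 1) by omega,
    show j + 2 + b + j = 2 * j + (b + 2) by omega]
  simp only [pow_add, pow_mul, neg_one_sq, one_pow, one_mul, hfib]
  ring

/-- the key identity: `Y₀ * V₀ = 1`, in `ℕ` land -/
lemma yb_diag (i : ℕ) : yb i i = 1 := by simp [yb]

lemma yb_vb (i j : ℕ) :
    (∑ k ∈ Finset.range (i+1), yb i k * vb k j) = if i = j then 1 else 0 := by
  rcases lt_trichotomy i j with hij | rfl | hij
  · rw [if_neg (by omega)]
    refine Finset.sum_eq_zero fun k hk => ?_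
    rw [vb_strict k j (by simp only [Finset.mem_range] at hk; omega), mul_zero]
  · rw [if_pos rfl]
    rw [Finset.sum_eq_single_of_mem i (by simp)]
    · rw [yb_diag, vb_diag, one_mul]
    · intro k hk hne
      rw [vb_strict k i (by simp only [Finset.mem_range] at hk; omega), mul_zero]
  · -- the interesting case `j < i`
    rw [if_neg (by omega)]
    set g : ℕ → ℝ := fun m => ∑ k ∈ Finset.range m, yb m k * vb k j with hgdef
    have hg : ∀ m, j + 3 ≤ m → g m = g (m - 2) + vb (m - 1) j := by
      intro m hm
      obtain ⟨i, rfl⟩ : ∃ i, m = i + 2 := ⟨m - 2, by omega⟩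
      have e1 : i + 2 - 2 = i := by omega
      have e2 : i + 2 - 1 = i + 1 := by omega
      rw [e1, e2, hgdef]
      simp only
      rw [Finset.sum_range_succ, Finset.sum_range_succ]
      have hy1 : yb (i + 2) (i + 1) = 1 := by
        rw [yb, if_neg (by omega), if_pos (by constructor <;> omega)]
      have hy0 : yb (i + 2) i = 0 := by
        rw [yb, if_neg (by omega), if_neg (by push_neg; intro _; omega)]
      rw [hy1, hy0, one_mul, zero_mul, add_zero]
      congr 1
      refine Finset.sum_congr rfl fun k hk => ?_
      simp only [Finset.mem_range] at hk
      have : yb (i + 2) k = yb i k := by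
        rcases eq_or_ne i k with rfl | hne
        · omega
        rw [yb, yb, if_neg (by omega), if_neg hne]
        by_cases hpar : i % 2 = k % 2
        · rw [if_neg (by push_neg; intro _; omega), if_neg (by push_neg; intro _; omega)]
        · rw [if_pos ⟨by omega, by omega⟩, if_pos ⟨by omega, by omega⟩]
      rw [this]
    have key : ∀ d m, m = j + 1 + d → g m = - vb m j := by
      intro d
      induction d using Nat.strong_induction_on with
      | _ d ih =>
        intro m hm
        match d, hm with
        | 0, hm =>
          subst hm
          rw [hgdef]
          simp only
          rw [Finset.sum_eq_single_of_mem j (by simp)]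
          · have hy1 : yb (j + 1) j = 1 := by
              rw [yb, if_neg (by omega), if_pos (by constructor <;> omega)]
            rw [hy1, vb_diag, one_mul, vb]
            rw [fe, if_neg (by omega), if_pos (by omega),
              (by omega : j + 1 - j = 1), Nat.fib_one,
              show j + 1 + j = 2 * j + 1 by omega]
            simp [pow_add, pow_mul]
          · intro k hk hne
            rw [vb_strict k j (by simp only [Finset.mem_range] at hk; omega), mul_zero]
        | 1, hm =>
          subst hm
          rw [hgdef]
          simp only
          rw [Finset.sum_eq_single_of_mem (j + 1) (by simp)]
          · have hy1 : yb (j + 2) (j + 1) = 1 := by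
              rw [yb, if_neg (by omega), if_pos (by constructor <;> omega)]
            rw [hy1, one_mul, vb, vb,
              fe, if_neg (by omega), if_pos (by omega), (by omega : j + 1 - j = 1),
              fe, if_neg (by omega), if_pos (by omega), (by omega : j + 2 - j = 2),
              Nat.fib_one, Nat.fib_two,
              show j + 1 + j = 2 * j + 1 by omega,
              show j + 2 + j = 2 * j + 2 by omega]
            simp [pow_add, pow_mul]
          · intro k hk hne
            simp only [Finset.mem_range] at hk
            rcases eq_or_ne k j with rfl | hne2
            · have hy0 : yb (k + 2) k = 0 := by
                rw [yb, if_neg (by omega), if_neg (by push_neg; intro _; omega)]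
              rw [hy0, zero_mul]
            · rw [vb_strict k j (by omega), mul_zero]
        | (e+2), hm =>
          subst hm
          rw [hg _ (by omega)]
          have h2 : j + 1 + (e + 2) - 2 = j + 1 + e := by omega
          have h1 : j + 1 + (e + 2) - 1 = j + 2 + e := by omega
          rw [h2, h1, ih e (by omega) _ rfl]
          have := vb_rec (j + 1 + (e + 2)) j (by omega)
          rw [h2, h1] at this
          rw [this]; ring
    rw [Finset.sum_range_succ, yb_diag, one_mul]
    have hk := key (i - (j+1)) i (by omega)
    rw [hgdef] at hk
    simp only at hk
    rw [hk]; ring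


variable {n : ℕ}


lemma max_abs (a : ℝ) : max a 0 + max (-a) 0 = |a| := by
  rcases le_total 0 a with h | h
  · rw [max_eq_left h, max_eq_right (by linarith), add_zero, abs_of_nonneg h]
  · rw [max_eq_right h, max_eq_left (by linarith), zero_add, abs_of_nonpos h]

lemma inv_entry_bound (Y V : Matrix (Fin n) (Fin n) ℝ)
    (hlower : ∀ i j, i < j → Y i j = 0)
    (h01 : ∀ i j, Y i j = 0 ∨ Y i j = 1)
    (hdiag : ∀ i, Y i i = 1)
    (hYV : Y * V = 1) :
    ∀ i j : Fin n, |V i j| ≤ fe i j := by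
  classical
  have hV : ∀ i j : Fin n, V i j
      = (if i = j then 1 else 0) - ∑ k ∈ Finset.Iio i, Y i k * V k j := by
    intro i j
    have h1 : (Y * V) i j = (1 : Matrix (Fin n) (Fin n) ℝ) i j := by rw [hYV]
    rw [Matrix.mul_apply, Matrix.one_apply] at h1
    have h2 : ∑ k ∈ Finset.Iic i, Y i k * V k j = ∑ k, Y i k * V k j := by
      refine Finset.sum_subset (Finset.subset_univ _) fun k _ hk => ?_
      rw [hlower i k (by simpa using hk), zero_mul]
    rw [← Finset.Iio_insert, Finset.sum_insert (by simp), hdiag, one_mul] at h2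
    rw [← h2] at h1
    linarith [h1]
  have htri : ∀ (j i : Fin n), i < j → V i j = 0 := by
    intro j
    have H : ∀ m : ℕ, ∀ i : Fin n, (i : ℕ) = m → i < j → V i j = 0 := by
      intro m
      induction m using Nat.strong_induction_on with
      | _ m ih =>
        intro i him hij
        rw [hV i j, if_neg (Fin.ne_of_lt hij), zero_sub,
          Finset.sum_eq_zero, neg_zero]
        intro k hk
        rw [Finset.mem_Iio] at hk
        rw [ih k (by omega) k rfl (lt_trans hk hij), mul_zero]
    exact fun i => H i i rfl
  -- main induction
  intro i j
  rcases lt_or_ge i j with hij | hij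
  · rw [htri j i hij, abs_zero]; exact fe_nonneg _ _
  set p : Fin n → ℝ := fun i => ∑ k ∈ Finset.Icc j i, max (V k j) 0 with hp
  set q : Fin n → ℝ := fun i => ∑ k ∈ Finset.Icc j i, max (-(V k j)) 0 with hq
  have hpnn : ∀ i, 0 ≤ p i := fun i =>
    Finset.sum_nonneg fun k _ => le_max_right _ _
  have hqnn : ∀ i, 0 ≤ q i := fun i =>
    Finset.sum_nonneg fun k _ => le_max_right _ _
  have main : ∀ d : ℕ, ∀ i : Fin n, (i : ℕ) = (j : ℕ) + d →
      |V i j| ≤ fe i j ∧ p i ≤ (Nat.fib (d+1) : ℝ) ∧ q i ≤ (Nat.fib (d+1) : ℝ)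
        ∧ p i + q i ≤ (Nat.fib (d+2) : ℝ) := by
    intro d
    induction d with
    | zero =>
      intro i hi
      have : i = j := Fin.ext (by omega)
      subst this
      have hVd : V i i = 1 := by
        rw [hV, if_pos rfl, Finset.sum_eq_zero, sub_zero]
        intro k hk
        rw [Finset.mem_Iio] at hk
        rw [htri i k hk, mul_zero]
      have h1 : p i = 1 := by
        rw [hp]; simp [Finset.Icc_self, hVd]
      have h2 : q i = 0 := by
        rw [hq]; simp [Finset.Icc_self, hVd]
      rw [h1, h2, hVd, fe, if_pos rfl]
      norm_num
    | succ d IH =>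
      intro i hi
      have hin : (j : ℕ) + d < n := by omega
      set i' : Fin n := ⟨(j : ℕ) + d, hin⟩ with hi'
      have hIH := IH i' rfl
      have hji' : j ≤ i' := by rw [Fin.le_def]; simp [hi']
      have hji : j < i := by rw [Fin.lt_def]; omega
      -- the recursion for V i j
      have hVi : V i j = -(∑ k ∈ Finset.Icc j i', Y i k * V k j) := by
        rw [hV, if_neg (Fin.ne_of_gt hji), zero_sub, neg_inj]
        refine (Finset.sum_subset ?_ ?_).symm
        · intro k hk
          rw [Finset.mem_Icc] at hk
          rw [Finset.mem_Iio, Fin.lt_def]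
          have := hk.2
          rw [Fin.le_def] at this
          simp [hi'] at this
          omega
        · intro k hk hk2
          rw [Finset.mem_Iio] at hk
          rw [Finset.mem_Icc, Fin.le_def, Fin.le_def] at hk2
          push_neg at hk2
          have hkj : k < j := by
            rw [Fin.lt_def]
            by_contra hc
            push_neg at hc
            have := hk2 hc
            rw [Fin.lt_def] at hk
            simp [hi'] at this
            omega
          rw [htri j k hkj, mul_zero]
      have hSle : (∑ k ∈ Finset.Icc j i', Y i k * V k j) ≤ p i' := by
        refine Finset.sum_le_sum fun k _ => ?_
        rcases h01 i k with h | h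
        · rw [h, zero_mul]; exact le_max_right _ _
        · rw [h, one_mul]; exact le_max_left _ _
      have hSge : -(q i') ≤ (∑ k ∈ Finset.Icc j i', Y i k * V k j) := by
        rw [hq, ← Finset.sum_neg_distrib]
        refine Finset.sum_le_sum fun k _ => ?_
        rcases h01 i k with h | h
        · rw [h, zero_mul]
          simp [le_max_right]
        · rw [h, one_mul]
          have := le_max_left (-(V k j)) 0
          linarith
      have hVup : V i j ≤ q i' := by rw [hVi]; linarith
      have hVlo : -(p i') ≤ V i j := by rw [hVi]; linarith
      have hIcc : Finset.Icc j i = insert i (Finset.Icc j i') := by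
        ext k
        simp only [Finset.mem_insert, Finset.mem_Icc, Fin.le_def, Fin.ext_iff, hi']
        omega
      have hnotmem : i ∉ Finset.Icc j i' := by
        simp only [Finset.mem_Icc, Fin.le_def, hi']
        omega
      have hpi : p i = max (V i j) 0 + p i' := by
        rw [hp]; simp only; rw [hIcc, Finset.sum_insert hnotmem]
      have hqi : q i = max (-(V i j)) 0 + q i' := by
        rw [hq]; simp only; rw [hIcc, Finset.sum_insert hnotmem]
      have hm1 : max (V i j) 0 ≤ q i' := max_le hVup (hqnn i')
      have hm2 : max (-(V i j)) 0 ≤ p i' := max_le (by linarith) (hpnn i')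
      have habs : |V i j| ≤ (Nat.fib (d + 1) : ℝ) := by
        rw [abs_le]
        constructor
        · linarith [hIH.2.1]
        · linarith [hIH.2.2.1]
      have hfe : fe i j = (Nat.fib (d + 1) : ℝ) := by
        rw [fe, if_neg (by omega), if_pos (by rw [Fin.lt_def] at hji; exact hji),
          (by omega : (i : ℕ) - (j : ℕ) = d + 1)]
      have hfib3 : (Nat.fib (d + 3) : ℝ) = Nat.fib (d + 1) + Nat.fib (d + 2) := by
        rw [show d + 3 = (d + 1) + 2 by omega, Nat.fib_add_two]
        push_cast; ring
      refine ⟨by rw [hfe]; exact habs, ?_, ?_, ?_⟩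
      · rw [hpi]; linarith [hIH.2.2.2]
      · rw [hqi]; linarith [hIH.2.2.2]
      · rw [hpi, hqi]
        have : max (V i j) 0 + max (-(V i j)) 0 = |V i j| := max_abs _
        rw [show d + 1 + 2 = d + 3 by omega, hfib3]
        linarith [hIH.2.2.2]
  exact (main ((i : ℕ) - (j : ℕ)) i (by rw [Fin.le_def] at hij; omega)).1


/-- real spectrum embeds into complex spectrum of the complexification -/
lemma spec_map {A : Matrix (Fin n) (Fin n) ℝ} {r : ℝ} (h : r ∈ spectrum ℝ A) :
    (r : ℂ) ∈ spectrum ℂ (A.map (algebraMap ℝ ℂ)) := by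
  rw [spectrum.mem_iff] at h ⊢
  intro hc
  apply h
  rw [Matrix.isUnit_iff_isUnit_det, isUnit_iff_ne_zero]
  rw [Matrix.isUnit_iff_isUnit_det, isUnit_iff_ne_zero] at hc
  intro h0
  apply hc
  have key : algebraMap ℂ (Matrix (Fin n) (Fin n) ℂ) (r : ℂ) - A.map (algebraMap ℝ ℂ)
      = (algebraMap ℝ (Matrix (Fin n) (Fin n) ℝ) r - A).map (algebraMap ℝ ℂ) := by
    rw [Matrix.map_sub _ (fun a b => by push_cast; ring)]
    congr 1
    rw [Matrix.algebraMap_eq_diagonal, Matrix.algebraMap_eq_diagonal,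
      Matrix.diagonal_map (map_zero _)]
    congr 1
  rw [key, ← RingHom.mapMatrix_apply, ← RingHom.map_det, h0, map_zero]

lemma rayleigh (A : Matrix (Fin n) (Fin n) ℝ) (hA : A.IsHermitian) (C : ℝ)
    (hC : ∀ i, hA.eigenvalues i ≤ C) (w : Fin n → ℝ) :
    w ⬝ᵥ (A *ᵥ w) ≤ C * (w ⬝ᵥ w) := by
  classical
  set U : Matrix (Fin n) (Fin n) ℝ := (hA.eigenvectorUnitary : Matrix (Fin n) (Fin n) ℝ) with hU
  have hstar : star U = Uᵀ := by
    ext i j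
    simp [Matrix.star_eq_conjTranspose, Matrix.conjTranspose_apply]
  have hUU : U * Uᵀ = 1 := by
    have h2 := hA.eigenvectorUnitary.2
    rw [Matrix.mem_unitaryGroup_iff] at h2
    rw [← hstar]
    exact h2
  have hspec := hA.spectral_theorem
  rw [RCLike.ofReal_real_eq_id] at hspec
  set ev : Fin n → ℝ := hA.eigenvalues with hev
  set x : Fin n → ℝ := Uᵀ *ᵥ w with hx
  have hxw : w ᵥ* U = x := (Matrix.mulVec_transpose U w).symm
  have h1 : w ⬝ᵥ (A *ᵥ w) = ∑ i, x i * (ev i * x i) := by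
    rw [hspec, Unitary.conjStarAlgAut_apply, ← hU, hstar]
    rw [← Matrix.mulVec_mulVec, ← Matrix.mulVec_mulVec, Matrix.dotProduct_mulVec, hxw]
    simp [dotProduct, Matrix.mulVec_diagonal]
    rw [← hx]
  have h2 : x ⬝ᵥ x = w ⬝ᵥ w := by
    calc x ⬝ᵥ x = (w ᵥ* U) ⬝ᵥ x := by rw [hxw]
    _ = w ⬝ᵥ (U *ᵥ x) := (Matrix.dotProduct_mulVec w U x).symm
    _ = w ⬝ᵥ ((U * Uᵀ) *ᵥ w) := by rw [hx, Matrix.mulVec_mulVec]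
    _ = w ⬝ᵥ w := by rw [hUU, Matrix.one_mulVec]
  rw [h1]
  calc ∑ i, x i * (ev i * x i) ≤ ∑ i, C * (x i * x i) := by
        refine Finset.sum_le_sum fun i _ => ?_
        have hxi : 0 ≤ x i * x i := mul_self_nonneg _
        calc x i * (ev i * x i) = ev i * (x i * x i) := by ring
        _ ≤ C * (x i * x i) := mul_le_mul_of_nonneg_right (hC i) hxi
  _ = C * (x ⬝ᵥ x) := by rw [dotProduct, Finset.mul_sum]
  _ = C * (w ⬝ᵥ w) := by rw [h2]

end Stmt16Aux

/-- The spectral radius of a real matrix, i.e. the largest modulus of a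
complex eigenvalue. -/
noncomputable def specRad {n : ℕ} (A : Matrix (Fin n) (Fin n) ℝ) : ℝ≥0∞ :=
  spectralRadius ℂ (A.map (algebraMap ℝ ℂ))

/-- `ρ(Z⁻¹) ≤ ρ(Z₀⁻¹)` for `Z = YYᵀ`, `Y` lower triangular (0,1) with unit
diagonal, and `Z₀ = Y₀Y₀ᵀ`. -/
theorem stmt_16 (n : ℕ) (Y : Matrix (Fin n) (Fin n) ℝ)
    (hlower : ∀ i j, i < j → Y i j = 0)
    (h01 : ∀ i j, Y i j = 0 ∨ Y i j = 1)
    (hdiag : ∀ i, Y i i = 1)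
    (Z : Matrix (Fin n) (Fin n) ℝ) (hZ : Z = Y * Yᵀ)
    (Y₀ : Matrix (Fin n) (Fin n) ℝ)
    (hY₀ : ∀ i j : Fin n, Y₀ i j =
      if i < j then 0 else if i = j then 1 else
        if (i : ℕ) % 2 ≠ (j : ℕ) % 2 then 1 else 0)
    (Z₀ : Matrix (Fin n) (Fin n) ℝ) (hZ₀ : Z₀ = Y₀ * Y₀ᵀ) :
    specRad Z⁻¹ ≤ specRad Z₀⁻¹ := by
  classical
  open Stmt16Aux in
  -- Y is invertible with inverse V
  have hdetY : IsUnit Y.det := by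
    rw [Matrix.det_of_lowerTriangular Y (fun i j h => hlower i j h)]
    simp [hdiag]
  set V : Matrix (Fin n) (Fin n) ℝ := Y⁻¹ with hVdef
  have hYV : Y * V = 1 := Matrix.mul_nonsing_inv Y hdetY
  have hVb : ∀ i j, |V i j| ≤ fe i j := inv_entry_bound Y V hlower h01 hdiag hYV
  -- Y₀ agrees with yb, and V0 is its inverse
  have hY₀yb : ∀ i j : Fin n, Y₀ i j = yb i j := by
    intro i j
    rw [hY₀]
    rcases lt_trichotomy i j with h | h | h
    · have h' : (i : ℕ) < (j : ℕ) := h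
      rw [if_pos h, yb, if_neg (by omega), if_neg (by push_neg; intro h2; omega)]
    · subst h; simp [yb]
    · have h' : (j : ℕ) < (i : ℕ) := h
      rw [if_neg (by exact not_lt_of_gt h), if_neg (Fin.ne_of_gt h), yb,
        if_neg (by omega : ¬ (i : ℕ) = (j : ℕ))]
      by_cases hp : (i : ℕ) % 2 ≠ (j : ℕ) % 2
      · rw [if_pos hp, if_pos ⟨h', hp⟩]
      · rw [if_neg hp, if_neg (by push_neg at hp ⊢; intro _; exact hp)]
  set V0 : Matrix (Fin n) (Fin n) ℝ := Matrix.of (fun i j => vb i j) with hV0def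
  have hY₀V0 : Y₀ * V0 = 1 := by
    ext i j
    rw [Matrix.mul_apply, Matrix.one_apply]
    have h1 : ∑ k : Fin n, Y₀ i k * V0 k j
        = ∑ m ∈ Finset.range n, yb i m * vb m j := by
      rw [← Fin.sum_univ_eq_sum_range (fun m => yb i m * vb m j) n]
      exact Finset.sum_congr rfl fun k _ => by rw [hY₀yb, hV0def]; rfl
    have h2 : ∑ m ∈ Finset.range ((i : ℕ) + 1), yb i m * vb m j
        = ∑ m ∈ Finset.range n, yb i m * vb m j := by
      refine Finset.sum_subset ?_ fun m _ hm => ?_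
      · intro m hm; simp only [Finset.mem_range] at hm ⊢; omega
      · simp only [Finset.mem_range] at hm
        rw [yb, if_neg (by omega), if_neg (by push_neg; intro h; omega), zero_mul]
    rw [h1, ← h2, yb_vb]
    by_cases h : i = j
    · rw [if_pos h, if_pos (by rw [h])]
    · rw [if_neg h, if_neg (by rw [Fin.ext_iff] at h; exact h)]
  have htransR : ∀ M : Matrix (Fin n) (Fin n) ℝ, Mᴴ = Mᵀ := fun M => by
    ext i j; simp [Matrix.conjTranspose_apply]
  have hZinv : Z⁻¹ = Vᵀ * V := by
    rw [hZ, Matrix.mul_inv_rev, ← Matrix.transpose_nonsing_inv, hVdef]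
  have hZ₀inv : Z₀⁻¹ = V0ᵀ * V0 := by
    rw [hZ₀, Matrix.mul_inv_rev, ← Matrix.transpose_nonsing_inv,
      Matrix.inv_eq_right_inv hY₀V0]
  have hZ₀herm : (Z₀⁻¹).IsHermitian := by
    rw [Matrix.IsHermitian, htransR, hZ₀inv, Matrix.transpose_mul,
      Matrix.transpose_transpose]
  -- spectral radius as a sup
  rw [specRad, specRad, spectralRadius]
  refine iSup₂_le fun μ hμ => ?_
  rw [spectrum.mem_iff] at hμ
  have hdet0 : (algebraMap ℂ (Matrix (Fin n) (Fin n) ℂ) μ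
      - (Z⁻¹).map (algebraMap ℝ ℂ)).det = 0 := by
    by_contra h
    exact hμ ((Matrix.isUnit_iff_isUnit_det _).mpr (isUnit_iff_ne_zero.mpr h))
  obtain ⟨v, hv0, hveq⟩ := (Matrix.exists_mulVec_eq_zero_iff).mpr hdet0
  set M : Matrix (Fin n) (Fin n) ℂ := (Z⁻¹).map (algebraMap ℝ ℂ) with hM
  have hMv : M *ᵥ v = μ • v := by
    rw [Matrix.sub_mulVec] at hveq
    have h3 : (algebraMap ℂ (Matrix (Fin n) (Fin n) ℂ) μ) *ᵥ v = μ • v := by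
      rw [Matrix.algebraMap_eq_diagonal]
      ext i
      simp [Matrix.mulVec_diagonal]
    rw [h3] at hveq
    rw [← sub_eq_zero, ← neg_sub]
    rw [← neg_zero, ← hveq]
  set W : Matrix (Fin n) (Fin n) ℂ := V.map (algebraMap ℝ ℂ) with hW
  have hMW : M = Wᴴ * W := by
    rw [hM, hZinv, Matrix.map_mul]
    congr 1
    ext i j
    simp [hW, Matrix.conjTranspose_apply, Matrix.map_apply, Complex.conj_ofReal]
  -- Rayleigh quotient computation
  set u : Fin n → ℝ := fun k => ‖v k‖ with hu
  set N : ℝ := ∑ k, u k ^ 2 with hN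
  set S : ℝ := ∑ i, ‖(W *ᵥ v) i‖ ^ 2 with hS
  have habs2 : ∀ z : ℂ, star z * z = ((‖z‖ ^ 2 : ℝ) : ℂ) := by
    intro z
    rw [Complex.star_def, ← Complex.normSq_eq_conj_mul_self, Complex.sq_norm]
  have hdot1 : dotProduct (star v) v = ((N : ℝ) : ℂ) := by
    rw [dotProduct, hN, Complex.ofReal_sum]
    exact Finset.sum_congr rfl fun k _ => habs2 (v k)
  have hdot2 : dotProduct (star v) (M *ᵥ v) = ((S : ℝ) : ℂ) := by
    rw [hMW, ← Matrix.mulVec_mulVec, Matrix.dotProduct_mulVec, ← Matrix.star_mulVec,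
      dotProduct, hS, Complex.ofReal_sum]
    exact Finset.sum_congr rfl fun k _ => habs2 ((W *ᵥ v) k)
  have hNpos : 0 < N := by
    have hex : ∃ k, v k ≠ 0 := by
      by_contra h; push_neg at h; exact hv0 (funext h)
    obtain ⟨k, hk⟩ := hex
    refine Finset.sum_pos' (fun k _ => sq_nonneg _) ⟨k, Finset.mem_univ k, ?_⟩
    have : ‖v k‖ ≠ 0 := by simpa using hk
    positivity
  have hlam : μ * ((N : ℝ) : ℂ) = ((S : ℝ) : ℂ) := by
    rw [← hdot1, ← hdot2, hMv, dotProduct_smul, smul_eq_mul]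
  have hmu : μ = ((S / N : ℝ) : ℂ) := by
    have hNne : ((N : ℝ) : ℂ) ≠ 0 := by exact_mod_cast hNpos.ne'
    rw [Complex.ofReal_div, eq_div_iff hNne, hlam]
  -- the sign trick and the bound S ≤ C * N
  set w : Fin n → ℝ := fun j => (-1) ^ (j : ℕ) * u j with hw
  have hsq : ∀ m : ℕ, ((-1 : ℝ) ^ m) ^ 2 = 1 := fun m => by
    rw [← pow_mul, mul_comm, pow_mul, neg_one_sq, one_pow]
  have hwN : dotProduct w w = N := by
    rw [dotProduct, hN]
    refine Finset.sum_congr rfl fun k _ => ?_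
    have h2 := hsq (k : ℕ)
    show ((-1) ^ (k : ℕ) * u k) * ((-1) ^ (k : ℕ) * u k) = u k ^ 2
    linear_combination u k ^ 2 * h2
  have hWvb : ∀ i : Fin n,
      ‖(W *ᵥ v) i‖ ≤ ∑ j : Fin n, fe (i : ℕ) (j : ℕ) * u j := by
    intro i
    simp only [Matrix.mulVec, dotProduct]
    refine le_trans (norm_sum_le _ _) (Finset.sum_le_sum fun j _ => ?_)
    rw [norm_mul, hW, Matrix.map_apply, Complex.coe_algebraMap, Complex.norm_real, Real.norm_eq_abs]
    exact mul_le_mul_of_nonneg_right (hVb i j) (norm_nonneg _)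
  have hV0w : ∀ i : Fin n,
      (V0 *ᵥ w) i = (-1) ^ (i : ℕ) * (∑ j : Fin n, fe (i : ℕ) (j : ℕ) * u j) := by
    intro i
    simp only [Matrix.mulVec, dotProduct, Finset.mul_sum]
    refine Finset.sum_congr rfl fun j _ => ?_
    have h2 := hsq (j : ℕ)
    show vb (i : ℕ) (j : ℕ) * ((-1) ^ (j : ℕ) * u j)
      = (-1) ^ (i : ℕ) * (fe (i : ℕ) (j : ℕ) * u j)
    rw [vb, pow_add]
    linear_combination ((-1 : ℝ) ^ (i : ℕ) * fe (i : ℕ) (j : ℕ) * u j) * h2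
  have hSbound : S ≤ dotProduct w (Z₀⁻¹ *ᵥ w) := by
    have h1 : dotProduct w (Z₀⁻¹ *ᵥ w)
        = dotProduct (V0 *ᵥ w) (V0 *ᵥ w) := by
      rw [hZ₀inv, ← Matrix.mulVec_mulVec, Matrix.dotProduct_mulVec,
        Matrix.vecMul_transpose]
    rw [h1, dotProduct, hS]
    refine Finset.sum_le_sum fun i _ => ?_
    rw [hV0w i, ← pow_two]
    rw [mul_pow, hsq, one_mul]
    exact pow_le_pow_left₀ (norm_nonneg _) (hWvb i) 2
  -- the largest eigenvalue of Z₀⁻¹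
  have hne : (Finset.univ : Finset (Fin n)).Nonempty := by
    have hex : ∃ k, v k ≠ 0 := by
      by_contra h; push_neg at h; exact hv0 (funext h)
    obtain ⟨k, _⟩ := hex
    exact ⟨k, Finset.mem_univ k⟩
  set C : ℝ := Finset.univ.sup' hne hZ₀herm.eigenvalues with hC
  have hCev : ∀ i, hZ₀herm.eigenvalues i ≤ C := fun i =>
    Finset.le_sup' _ (Finset.mem_univ i)
  have hray := rayleigh _ hZ₀herm C hCev w
  have hSN : S ≤ C * N := by
    rw [← hwN]
    exact le_trans hSbound hray
  have hSnn : 0 ≤ S := Finset.sum_nonneg fun i _ => sq_nonneg _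
  have hq1 : 0 ≤ S / N := div_nonneg hSnn hNpos.le
  have hq2 : S / N ≤ C := (div_le_iff₀ hNpos).mpr (by linarith [hSN])
  obtain ⟨i₀, _, hi₀⟩ := Finset.exists_mem_eq_sup' hne hZ₀herm.eigenvalues
  have hCspec : ((C : ℝ) : ℂ) ∈ spectrum ℂ ((Z₀⁻¹).map (algebraMap ℝ ℂ)) := by
    apply spec_map
    rw [hC, hi₀]
    exact hZ₀herm.eigenvalues_mem_spectrum_real i₀
  -- conclude
  have hnn : ‖μ‖₊ ≤ ‖((C : ℝ) : ℂ)‖₊ := by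
    rw [hmu]
    have : ‖((S / N : ℝ) : ℂ)‖ ≤ ‖((C : ℝ) : ℂ)‖ := by
      rw [Complex.norm_real, Complex.norm_real, Real.norm_eq_abs, Real.norm_eq_abs]
      rw [abs_of_nonneg hq1, abs_of_nonneg (le_trans hq1 hq2)]
      exact hq2
    exact this
  calc ((‖μ‖₊ : ℝ≥0∞)) ≤ (‖((C : ℝ) : ℂ)‖₊ : ℝ≥0∞) := by exact_mod_cast hnn
  _ ≤ spectralRadius ℂ ((Z₀⁻¹).map (algebraMap ℝ ℂ)) := by
      rw [spectralRadius]
      exact le_iSup₂ (f := fun k (_ : k ∈ spectrum ℂ ((Z₀⁻¹).map (algebraMap ℝ ℂ))) =>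
        (‖k‖₊ : ℝ≥0∞)) ((C : ℝ) : ℂ) hCspec
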